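/- (Hypercontractivity consequence) For any f : {0,1}^k → ℝ and 0 ≤ η ≤ 1, Σ_{S⊆[k]} f̂(S)^2 η^{2|S|} ≤ ‖f‖_{1+η²}², where f̂(S) are the Fourier coefficients with respect to the Walsh basis and ‖f‖_p = (2^{-k} Σ_x |f(x)|^p)^{1/p}. In particular, for the indicator 1_T of a set T of density δ = |T|/2^k, Σ_S 1̂_T(S)^2 η^{2|S|} ≤ δ^{2/(1+η²)}. -/

import Mathlib

open BigOperators Classical

/-- The Walsh function `W_S(x) = (-1)^{∑_{i∈S} x_i}` on `{0,1}^k`. -/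
def Walsh {k : ℕ} (S : Finset (Fin k)) (x : Fin k → Bool) : ℝ :=
  ∏ i ∈ S, (if x i then (-1 : ℝ) else 1)

open Real Set


-- AM-GM style helper
lemma two_le_add_of_one_le_mul {u v : ℝ} (hu : 0 < u) (hv : 0 < v) (h : 1 ≤ u * v) :
    2 ≤ u + v := by nlinarith [sq_nonneg (u - v), sq_nonneg (u + v - 2)]

lemma psi_nonneg {p : ℝ} (hp1 : 1 < p) (hp2 : p ≤ 2) {t : ℝ} (ht0 : 0 ≤ t) (ht1 : t ≤ 1) :
    2 * (p - 1) * t ≤ (1 + t) ^ (p - 1) - (1 - t) ^ (p - 1) := by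
  have hpm : (0:ℝ) < p - 1 := by linarith
  set ψ : ℝ → ℝ := fun t => (1 + t) ^ (p - 1) - (1 - t) ^ (p - 1) - 2 * (p - 1) * t with hψ
  have hcont : ContinuousOn ψ (Icc 0 1) := by
    apply ContinuousOn.sub
    apply ContinuousOn.sub
    · exact (continuousOn_const.add continuousOn_id).rpow_const
        (fun x hx => Or.inr (by linarith))
    · exact (continuousOn_const.sub continuousOn_id).rpow_const
        (fun x hx => Or.inr (by linarith))
    · exact continuousOn_const.mul continuousOn_id
  have hderiv : ∀ x ∈ Ioo (0:ℝ) 1, HasDerivAt ψ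
      ((p-1) * (1+x)^(p-1-1) + (p-1) * (1-x)^(p-1-1) - 2*(p-1)) x := by
    intro x hx
    have h1 := HasDerivAt.rpow_const (p := p - 1) ((hasDerivAt_id x).const_add 1)
      (Or.inl (by simp only [id]; nlinarith [hx.1]))
    have h2 := HasDerivAt.rpow_const (p := p - 1) ((hasDerivAt_id x).const_sub 1)
      (Or.inl (by simp only [id]; nlinarith [hx.2]))
    have h3 : HasDerivAt (fun t : ℝ => 2 * (p-1) * t) (2*(p-1)) x := by
      simpa using (hasDerivAt_id x).const_mul (2*(p-1))
    have := (h1.sub h2).sub h3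
    simp only [id] at this
    exact this.congr_deriv (by ring)
  have hd0 : ∀ x ∈ Ioo (0:ℝ) 1,
      0 ≤ (p-1) * (1+x)^(p-1-1) + (p-1) * (1-x)^(p-1-1) - 2*(p-1) := by
    intro x hx
    have hx1 : (0:ℝ) < 1 + x := by linarith [hx.1]
    have hx2 : (0:ℝ) < 1 - x := by linarith [hx.2]
    have hmul : 1 ≤ (1+x)^(p-1-1) * (1-x)^(p-1-1) := by
      rw [← Real.mul_rpow hx1.le hx2.le]
      apply Real.one_le_rpow_of_pos_of_le_one_of_nonpos (mul_pos hx1 hx2) (by nlinarith [sq_nonneg x]) (by linarith)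
    have := two_le_add_of_one_le_mul (Real.rpow_pos_of_pos hx1 _)
      (Real.rpow_pos_of_pos hx2 _) hmul
    nlinarith [this]
  have hmono : MonotoneOn ψ (Icc 0 1) := by
    apply monotoneOn_of_deriv_nonneg (convex_Icc 0 1) hcont
    · intro x hx
      rw [interior_Icc] at hx
      exact (hderiv x hx).differentiableAt.differentiableWithinAt
    · intro x hx
      rw [interior_Icc] at hx
      rw [(hderiv x hx).deriv]
      exact hd0 x hx
  have h0 : ψ 0 = 0 := by simp [hψ]
  have := hmono (left_mem_Icc.2 zero_le_one) ⟨ht0, ht1⟩ ht0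
  rw [h0] at this
  simpa [hψ] using this

lemma inner_ineq_nonneg {p : ℝ} (hp1 : 1 < p) (hp2 : p ≤ 2) {t : ℝ} (h0 : 0 ≤ t) (ht1 : t ≤ 1) :
    2 + p * (p - 1) * t ^ 2 ≤ (1 + t) ^ p + (1 - t) ^ p := by
  set φ : ℝ → ℝ := fun t => (1 + t) ^ p + (1 - t) ^ p - p * (p - 1) * t ^ 2 with hφ
  have hcont : ContinuousOn φ (Icc 0 1) := by
    apply ContinuousOn.sub
    apply ContinuousOn.add
    · exact (continuousOn_const.add continuousOn_id).rpow_const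
        (fun x hx => Or.inr (by linarith))
    · exact (continuousOn_const.sub continuousOn_id).rpow_const
        (fun x hx => Or.inr (by linarith))
    · exact (continuousOn_const.mul (continuousOn_pow 2))
  have hderiv : ∀ x ∈ Ioo (0:ℝ) 1, HasDerivAt φ
      (p * (1+x)^(p-1) - p * (1-x)^(p-1) - p * (p-1) * (2*x)) x := by
    intro x hx
    have h1 := HasDerivAt.rpow_const (p := p) ((hasDerivAt_id x).const_add 1)
      (Or.inl (by simp only [id]; nlinarith [hx.1]))
    have h2 := HasDerivAt.rpow_const (p := p) ((hasDerivAt_id x).const_sub 1)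
      (Or.inl (by simp only [id]; nlinarith [hx.2]))
    have h3 : HasDerivAt (fun t : ℝ => p * (p-1) * t^2) (p * (p-1) * (2*x)) x := by
      have := (hasDerivAt_pow 2 x).const_mul (p * (p-1))
      simpa using this
    have := (h1.add h2).sub h3
    simp only [id] at this
    exact this.congr_deriv (by ring)
  have hmono : MonotoneOn φ (Icc 0 1) := by
    apply monotoneOn_of_deriv_nonneg (convex_Icc 0 1) hcont
    · intro x hx
      rw [interior_Icc] at hx
      exact (hderiv x hx).differentiableAt.differentiableWithinAt
    · intro x hx
      rw [interior_Icc] at hx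
      rw [(hderiv x hx).deriv]
      have := psi_nonneg hp1 hp2 hx.1.le hx.2.le
      nlinarith [this, hp1]
  have h0' : φ 0 = 2 := by norm_num [hφ]
  have := hmono (left_mem_Icc.2 zero_le_one) ⟨h0, ht1⟩ h0
  rw [h0'] at this
  simp only [hφ] at this
  linarith


lemma inner_ineq {p : ℝ} (hp1 : 1 < p) (hp2 : p ≤ 2) {t : ℝ} (ht0 : -1 ≤ t) (ht1 : t ≤ 1) :
    2 + p * (p - 1) * t ^ 2 ≤ (1 + t) ^ p + (1 - t) ^ p := by
  rcases le_or_gt 0 t with h0 | h0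
  · exact inner_ineq_nonneg hp1 hp2 h0 ht1
  · have := inner_ineq_nonneg hp1 hp2 (t := -t) (by linarith) (by linarith)
    calc 2 + p * (p-1) * t^2 = 2 + p * (p-1) * (-t)^2 := by ring_nf
      _ ≤ (1 + -t)^p + (1 - -t)^p := this
      _ = (1 + t)^p + (1 - t)^p := by
          rw [show (1:ℝ) + -t = 1 - t by ring, show (1:ℝ) - -t = 1 + t by ring]; ring

lemma two_point_aux {p : ℝ} (hp1 : 1 < p) (hp2 : p ≤ 2) (a b : ℝ) (hba : |b| ≤ |a|) :
    a ^ 2 + (p - 1) * b ^ 2 ≤ ((|a + b| ^ p + |a - b| ^ p) / 2) ^ ((2:ℝ) / p) := by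
  have hp0 : (0:ℝ) < p := by linarith
  rcases eq_or_ne a 0 with rfl | ha
  · have hb : b = 0 := by simpa using le_antisymm (by simpa using hba) (abs_nonneg b)
    subst hb
    simp [Real.zero_rpow hp0.ne', Real.zero_rpow (by positivity : (2:ℝ)/p ≠ 0)]
  · set t : ℝ := b / a with htdef
    have hat : |t| ≤ 1 := by
      rw [htdef, abs_div, div_le_one (abs_pos.2 ha)]; exact hba
    have ht1 : -1 ≤ t := neg_le_of_abs_le hat
    have ht2 : t ≤ 1 := le_of_abs_le hat
    have hab : a + b = a * (1 + t) := by rw [htdef]; field_simp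
    have hab' : a - b = a * (1 - t) := by rw [htdef]; field_simp
    have h1t : (0:ℝ) ≤ 1 + t := by linarith
    have h2t : (0:ℝ) ≤ 1 - t := by linarith
    have e1 : |a + b| ^ p = |a| ^ p * (1 + t) ^ p := by
      rw [hab, abs_mul, abs_of_nonneg h1t, Real.mul_rpow (abs_nonneg a) h1t]
    have e2 : |a - b| ^ p = |a| ^ p * (1 - t) ^ p := by
      rw [hab', abs_mul, abs_of_nonneg h2t, Real.mul_rpow (abs_nonneg a) h2t]
    set I : ℝ := ((1 + t) ^ p + (1 - t) ^ p) / 2 with hI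
    have hIineq : 1 + p * (p - 1) / 2 * t ^ 2 ≤ I := by
      have := inner_ineq hp1 hp2 ht1 ht2
      rw [hI]; linarith
    have hs0 : (0:ℝ) ≤ p * (p - 1) / 2 * t ^ 2 := by
      have h := mul_nonneg (mul_nonneg hp0.le (by linarith : (0:ℝ) ≤ p - 1)) (sq_nonneg t)
      linarith
    have hbern : 1 + (p - 1) * t ^ 2 ≤ (1 + p * (p - 1) / 2 * t ^ 2) ^ ((2:ℝ)/p) := by
      have := one_add_mul_self_le_rpow_one_add (s := p * (p - 1) / 2 * t ^ 2)
        (by nlinarith) (p := (2:ℝ)/p) ((le_div_iff₀ hp0).2 (by linarith))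
      calc 1 + (p - 1) * t ^ 2 = 1 + (2:ℝ)/p * (p * (p - 1) / 2 * t ^ 2) := by
            field_simp
        _ ≤ _ := this
    have hImono : (1 + p * (p - 1) / 2 * t ^ 2) ^ ((2:ℝ)/p) ≤ I ^ ((2:ℝ)/p) :=
      Real.rpow_le_rpow (by nlinarith) hIineq (by positivity)
    have hM : ((|a + b| ^ p + |a - b| ^ p) / 2) ^ ((2:ℝ)/p)
        = a ^ 2 * I ^ ((2:ℝ)/p) := by
      rw [e1, e2, hI]
      rw [show |a| ^ p * (1 + t) ^ p + |a| ^ p * (1 - t) ^ p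
            = |a| ^ p * ((1 + t) ^ p + (1 - t) ^ p) by ring]
      rw [mul_div_assoc, Real.mul_rpow (by positivity) (by positivity),
        ← Real.rpow_mul (abs_nonneg a), show p * ((2:ℝ)/p) = 2 by field_simp,
        Real.rpow_two, sq_abs]
    rw [hM]
    have hbt : b ^ 2 = a ^ 2 * t ^ 2 := by
      rw [htdef]; field_simp
    calc a ^ 2 + (p - 1) * b ^ 2 = a ^ 2 * (1 + (p - 1) * t ^ 2) := by rw [hbt]; ring
      _ ≤ a ^ 2 * I ^ ((2:ℝ)/p) := by
          apply mul_le_mul_of_nonneg_left _ (sq_nonneg a)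
          exact le_trans hbern hImono

lemma two_point {p : ℝ} (hp1 : 1 < p) (hp2 : p ≤ 2) (a b : ℝ) :
    a ^ 2 + (p - 1) * b ^ 2 ≤ ((|a + b| ^ p + |a - b| ^ p) / 2) ^ ((2:ℝ) / p) := by
  rcases le_or_gt |b| |a| with h | h
  · exact two_point_aux hp1 hp2 a b h
  · have := two_point_aux hp1 hp2 b a h.le
    have hsq : b ^ 2 = |b| ^ 2 := (sq_abs b).symm
    have hsq' : a ^ 2 = |a| ^ 2 := (sq_abs a).symm
    have habs : a ^ 2 ≤ b ^ 2 := by rw [hsq, hsq']; nlinarith [abs_nonneg a, abs_nonneg b]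
    calc a ^ 2 + (p - 1) * b ^ 2 ≤ b ^ 2 + (p - 1) * a ^ 2 := by nlinarith
      _ ≤ ((|b + a| ^ p + |b - a| ^ p) / 2) ^ ((2:ℝ)/p) := this
      _ = ((|a + b| ^ p + |a - b| ^ p) / 2) ^ ((2:ℝ)/p) := by
          rw [show b + a = a + b by ring, abs_sub_comm b a]

lemma rev_minkowski {ι : Type*} [Fintype ι] (w u v : ι → ℝ) (hw : ∀ i, 0 ≤ w i)
    (hu : ∀ i, 0 ≤ u i) (hv : ∀ i, 0 ≤ v i) {r : ℝ} (hr0 : 0 < r) (hr1 : r ≤ 1) :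
    (∑ i, w i * u i ^ r) ^ r⁻¹ + (∑ i, w i * v i ^ r) ^ r⁻¹
      ≤ (∑ i, w i * (u i + v i) ^ r) ^ r⁻¹ := by
  rcases eq_or_lt_of_le hr1 with rfl | hr1
  · simp only [inv_one, Real.rpow_one, ← Finset.sum_add_distrib, ← mul_add]
    exact le_of_eq rfl
  set z : ι → ℝ := fun i => u i + v i with hz
  have hz0 : ∀ i, 0 ≤ z i := fun i => add_nonneg (hu i) (hv i)
  set D : ℝ := ∑ i, w i * z i ^ r with hD
  have hDnn : 0 ≤ D := Finset.sum_nonneg fun i _ =>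
    mul_nonneg (hw i) (Real.rpow_nonneg (hz0 i) r)
  -- generic Hölder step
  have key : ∀ (u' : ι → ℝ), (∀ i, 0 ≤ u' i) → (∀ i, u' i ≤ z i) →
      ∑ i, w i * u' i ^ r ≤ (∑ i, w i * u' i * z i ^ (r - 1)) ^ r * D ^ (1 - r) := by
    intro u' hu' hule
    have hconj : Real.HolderConjugate r⁻¹ (1 - r)⁻¹ := by
      rw [Real.holderConjugate_iff]
      constructor
      · exact (one_lt_inv₀ hr0).2 hr1
      · rw [inv_inv, inv_inv]; ring
    have hfnn : ∀ i, (0:ℝ) ≤ w i * u' i * z i ^ (r - 1) :=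
      fun i => mul_nonneg (mul_nonneg (hw i) (hu' i)) (Real.rpow_nonneg (hz0 i) _)
    have hgnn : ∀ i, (0:ℝ) ≤ w i * z i ^ r :=
      fun i => mul_nonneg (hw i) (Real.rpow_nonneg (hz0 i) _)
    have hH := Real.inner_le_Lp_mul_Lq_of_nonneg (Finset.univ)
      (f := fun i => (w i * u' i * z i ^ (r - 1)) ^ r)
      (g := fun i => (w i * z i ^ r) ^ (1 - r)) hconj
      (fun i _ => Real.rpow_nonneg (hfnn i) _) (fun i _ => Real.rpow_nonneg (hgnn i) _)
    have e1 : ∀ i, (w i * u' i * z i ^ (r - 1)) ^ r * (w i * z i ^ r) ^ (1 - r)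
        = w i * u' i ^ r := by
      intro i
      rcases eq_or_lt_of_le (hz0 i) with h0 | h0
      · have hui : u' i = 0 := by
          have h1 := hule i
          rw [← h0] at h1
          exact le_antisymm h1 (hu' i)
        rw [hui]
        simp [Real.zero_rpow hr0.ne']
      · have hwr : w i ^ r * w i ^ (1 - r) = w i := by
          rw [← Real.rpow_add' (hw i) (by norm_num : r + (1 - r) ≠ 0),
            show r + (1 - r) = (1:ℝ) by ring, Real.rpow_one]
        have hzr : (z i ^ (r - 1)) ^ r * (z i ^ r) ^ (1 - r) = 1 := by
          rw [← Real.rpow_mul (hz0 i), ← Real.rpow_mul (hz0 i), ← Real.rpow_add h0,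
            show (r - 1) * r + r * (1 - r) = 0 by ring, Real.rpow_zero]
        calc (w i * u' i * z i ^ (r - 1)) ^ r * (w i * z i ^ r) ^ (1 - r)
            = w i ^ r * u' i ^ r * (z i ^ (r - 1)) ^ r
              * (w i ^ (1 - r) * (z i ^ r) ^ (1 - r)) := by
              rw [Real.mul_rpow (mul_nonneg (hw i) (hu' i)) (Real.rpow_nonneg (hz0 i) _),
                Real.mul_rpow (hw i) (hu' i),
                Real.mul_rpow (hw i) (Real.rpow_nonneg (hz0 i) _)]
          _ = (w i ^ r * w i ^ (1 - r)) * u' i ^ r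
              * ((z i ^ (r - 1)) ^ r * (z i ^ r) ^ (1 - r)) := by ring
          _ = w i * u' i ^ r := by rw [hwr, hzr]; ring
    have e2 : ∀ i, ((w i * u' i * z i ^ (r - 1)) ^ r) ^ r⁻¹
        = w i * u' i * z i ^ (r - 1) := by
      intro i
      rw [← Real.rpow_mul (hfnn i), mul_inv_cancel₀ hr0.ne', Real.rpow_one]
    have e3 : ∀ i, ((w i * z i ^ r) ^ (1 - r)) ^ (1 - r)⁻¹
        = w i * z i ^ r := by
      intro i
      rw [← Real.rpow_mul (hgnn i),
        mul_inv_cancel₀ (by linarith : 1 - r ≠ 0), Real.rpow_one]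
    simp only [one_div, inv_inv] at hH
    rw [Finset.sum_congr rfl (fun i _ => e1 i)] at hH
    rw [Finset.sum_congr rfl (fun i _ => e2 i)] at hH
    rw [Finset.sum_congr rfl (fun i _ => e3 i)] at hH
    exact hH
  -- combine
  have hPQ : (∑ i, w i * u i * z i ^ (r - 1)) + (∑ i, w i * v i * z i ^ (r - 1)) = D := by
    rw [hD, ← Finset.sum_add_distrib]
    apply Finset.sum_congr rfl
    intro i _
    rcases eq_or_lt_of_le (hz0 i) with h0 | h0
    · have hui : u i = 0 := by have h1 := hu i; have h2 := hv i; simp only [hz] at h0; linarith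
      have hvi : v i = 0 := by have h1 := hu i; have h2 := hv i; simp only [hz] at h0; linarith
      rw [hui, hvi, ← h0, Real.zero_rpow hr0.ne']
      ring
    · have hzz : z i ^ r = z i * z i ^ (r - 1) := by
        have h2 := Real.rpow_add h0 1 (r - 1)
        rw [show (1:ℝ) + (r - 1) = r by ring] at h2
        rw [h2, Real.rpow_one]
      have : w i * u i * z i ^ (r - 1) + w i * v i * z i ^ (r - 1)
          = w i * ((u i + v i) * z i ^ (r - 1)) := by ring
      rw [this, hzz]
  have hPnn : 0 ≤ ∑ i, w i * u i * z i ^ (r - 1) := Finset.sum_nonneg fun i _ =>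
    mul_nonneg (mul_nonneg (hw i) (hu i)) (Real.rpow_nonneg (hz0 i) _)
  have hQnn : 0 ≤ ∑ i, w i * v i * z i ^ (r - 1) := Finset.sum_nonneg fun i _ =>
    mul_nonneg (mul_nonneg (hw i) (hv i)) (Real.rpow_nonneg (hz0 i) _)
  have step : ∀ S P' : ℝ, 0 ≤ S → 0 ≤ P' → S ≤ P' ^ r * D ^ (1 - r) →
      S ^ r⁻¹ ≤ P' * D ^ ((1 - r) * r⁻¹) := by
    intro S P' hS hP' h
    calc S ^ r⁻¹ ≤ (P' ^ r * D ^ (1 - r)) ^ r⁻¹ :=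
          Real.rpow_le_rpow hS h (inv_nonneg.2 hr0.le)
      _ = (P' ^ r) ^ r⁻¹ * (D ^ (1 - r)) ^ r⁻¹ :=
          Real.mul_rpow (Real.rpow_nonneg hP' _) (Real.rpow_nonneg hDnn _)
      _ = P' * D ^ ((1 - r) * r⁻¹) := by
          rw [← Real.rpow_mul hP', mul_inv_cancel₀ hr0.ne', Real.rpow_one,
            ← Real.rpow_mul hDnn]
  have hU := step _ _ (Finset.sum_nonneg fun i _ =>
      mul_nonneg (hw i) (Real.rpow_nonneg (hu i) _)) hPnn
    (key u hu (fun i => le_add_of_nonneg_right (hv i)))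
  have hV := step _ _ (Finset.sum_nonneg fun i _ =>
      mul_nonneg (hw i) (Real.rpow_nonneg (hv i) _)) hQnn
    (key v hv (fun i => le_add_of_nonneg_left (hu i)))
  have hfin : D * D ^ ((1 - r) * r⁻¹) = D ^ r⁻¹ := by
    have hexp : 1 + (1 - r) * r⁻¹ = r⁻¹ := by field_simp; ring
    calc D * D ^ ((1 - r) * r⁻¹) = D ^ (1:ℝ) * D ^ ((1 - r) * r⁻¹) := by rw [Real.rpow_one]
      _ = D ^ (1 + (1 - r) * r⁻¹) :=
          (Real.rpow_add' hDnn (by rw [hexp]; exact inv_ne_zero hr0.ne')).symm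
      _ = D ^ r⁻¹ := by rw [hexp]
  calc (∑ i, w i * u i ^ r) ^ r⁻¹ + (∑ i, w i * v i ^ r) ^ r⁻¹
      ≤ (∑ i, w i * u i * z i ^ (r - 1)) * D ^ ((1 - r) * r⁻¹)
        + (∑ i, w i * v i * z i ^ (r - 1)) * D ^ ((1 - r) * r⁻¹) := add_le_add hU hV
    _ = ((∑ i, w i * u i * z i ^ (r - 1)) + (∑ i, w i * v i * z i ^ (r - 1)))
        * D ^ ((1 - r) * r⁻¹) := by ring
    _ = D * D ^ ((1 - r) * r⁻¹) := by rw [hPQ]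
    _ = D ^ r⁻¹ := hfin

noncomputable def coefW {k : ℕ} (F : (Fin k → Bool) → ℝ) (s : Fin k → Bool) : ℝ :=
  ((2:ℝ) ^ k)⁻¹ * ∑ x, F x * ∏ i, (if s i && x i then (-1:ℝ) else 1)

def wtW {k : ℕ} (s : Fin k → Bool) : ℕ := ∑ i, (if s i then 1 else 0)

lemma sum_succ_cube {k : ℕ} (g : (Fin (k+1) → Bool) → ℝ) :
    ∑ y, g y = ∑ x : Fin k → Bool, (g (Fin.cons false x) + g (Fin.cons true x)) := by
  rw [← (Fintype.sum_equiv (Fin.consEquiv (fun _ : Fin (k+1) => Bool))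
    (fun p => g (Fin.cons p.1 p.2)) g (fun p => rfl))]
  rw [Fintype.sum_prod_type, Fintype.sum_bool, ← Finset.sum_add_distrib]
  apply Finset.sum_congr rfl
  intro x _
  ring

lemma wprod_cons {k : ℕ} (sb b : Bool) (s x : Fin k → Bool) :
    (∏ i, (if (Fin.cons sb s : Fin (k+1) → Bool) i && (Fin.cons b x : Fin (k+1) → Bool) i
      then (-1:ℝ) else 1))
    = (if sb && b then (-1:ℝ) else 1) * ∏ i, (if s i && x i then (-1:ℝ) else 1) := by
  rw [Fin.prod_univ_succ]
  simp

lemma wtW_cons {k : ℕ} (sb : Bool) (s : Fin k → Bool) :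
    wtW (Fin.cons sb s) = (if sb then 1 else 0) + wtW s := by
  unfold wtW
  rw [Fin.sum_univ_succ]
  simp

lemma coefW_cons_false {k : ℕ} (F : (Fin (k+1) → Bool) → ℝ) (s : Fin k → Bool) :
    coefW F (Fin.cons false s)
      = coefW (fun x => (F (Fin.cons false x) + F (Fin.cons true x)) / 2) s := by
  unfold coefW
  rw [sum_succ_cube (fun y => F y * ∏ i, (if (Fin.cons false s : Fin (k+1) → Bool) i && y i
    then (-1:ℝ) else 1))]
  have : ∀ x : Fin k → Bool,
      (F (Fin.cons false x) * ∏ i, (if (Fin.cons false s : Fin (k+1) → Bool) i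
          && (Fin.cons false x : Fin (k+1) → Bool) i then (-1:ℝ) else 1))
      + (F (Fin.cons true x) * ∏ i, (if (Fin.cons false s : Fin (k+1) → Bool) i
          && (Fin.cons true x : Fin (k+1) → Bool) i then (-1:ℝ) else 1))
      = 2 * (((F (Fin.cons false x) + F (Fin.cons true x)) / 2)
          * ∏ i, (if s i && x i then (-1:ℝ) else 1)) := by
    intro x
    rw [wprod_cons, wprod_cons]
    simp only [Bool.false_and, Bool.and_false, if_neg (Bool.false_ne_true ∘ id)]
    ring_nf
  rw [Finset.sum_congr rfl (fun x _ => this x), ← Finset.mul_sum]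
  rw [pow_succ]
  field_simp

lemma coefW_cons_true {k : ℕ} (F : (Fin (k+1) → Bool) → ℝ) (s : Fin k → Bool) :
    coefW F (Fin.cons true s)
      = coefW (fun x => (F (Fin.cons false x) - F (Fin.cons true x)) / 2) s := by
  unfold coefW
  rw [sum_succ_cube (fun y => F y * ∏ i, (if (Fin.cons true s : Fin (k+1) → Bool) i && y i
    then (-1:ℝ) else 1))]
  have : ∀ x : Fin k → Bool,
      (F (Fin.cons false x) * ∏ i, (if (Fin.cons true s : Fin (k+1) → Bool) i
          && (Fin.cons false x : Fin (k+1) → Bool) i then (-1:ℝ) else 1))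
      + (F (Fin.cons true x) * ∏ i, (if (Fin.cons true s : Fin (k+1) → Bool) i
          && (Fin.cons true x : Fin (k+1) → Bool) i then (-1:ℝ) else 1))
      = 2 * (((F (Fin.cons false x) - F (Fin.cons true x)) / 2)
          * ∏ i, (if s i && x i then (-1:ℝ) else 1)) := by
    intro x
    rw [wprod_cons, wprod_cons]
    simp only [Bool.true_and, Bool.and_false]
    norm_num
    ring_nf
  rw [Finset.sum_congr rfl (fun x _ => this x), ← Finset.mul_sum]
  rw [pow_succ]
  field_simp

lemma hyper_main {η : ℝ} (hη0 : 0 < η) (hη1 : η ≤ 1) :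
    ∀ (k : ℕ) (F : (Fin k → Bool) → ℝ),
    ∑ s : Fin k → Bool, (coefW F s) ^ 2 * η ^ (2 * wtW s)
      ≤ (((2:ℝ) ^ k)⁻¹ * ∑ x, |F x| ^ ((1:ℝ) + η ^ 2)) ^ ((2:ℝ) / (1 + η ^ 2)) := by
  have hp0 : (0:ℝ) < 1 + η ^ 2 := by positivity
  have hp1 : (1:ℝ) < 1 + η ^ 2 := by nlinarith
  have hp2 : (1:ℝ) + η ^ 2 ≤ 2 := by nlinarith
  intro k
  induction k with
  | zero =>
    intro F
    have hsum : ∀ (g : (Fin 0 → Bool) → ℝ), ∑ x, g x = g default := fun g =>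
      Fintype.sum_eq_single default (fun b hb => absurd (Subsingleton.elim b default) hb)
    rw [hsum]
    have hwt : wtW (default : Fin 0 → Bool) = 0 := by
      unfold wtW; simp
    have hc : coefW F default = F default := by
      unfold coefW
      rw [hsum (fun x => F x * ∏ i, (if (default : Fin 0 → Bool) i && x i then (-1:ℝ) else 1))]
      simp
    rw [hwt, hc, hsum (fun x => |F x| ^ ((1:ℝ) + η ^ 2))]
    norm_num
    calc F default ^ 2 = |F default| ^ 2 := (sq_abs _).symm
      _ = |F default| ^ (2:ℝ) := (Real.rpow_two _).symm
      _ = (|F default| ^ ((1:ℝ) + η ^ 2)) ^ ((2:ℝ) / (1 + η ^ 2)) := by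
          rw [← Real.rpow_mul (abs_nonneg _),
            mul_div_cancel₀ (2:ℝ) hp0.ne']
      _ ≤ _ := le_refl _
  | succ k ih =>
    intro F
    set p : ℝ := 1 + η ^ 2 with hpdef
    set G : (Fin k → Bool) → ℝ :=
      fun x => (F (Fin.cons false x) + F (Fin.cons true x)) / 2 with hG
    set H : (Fin k → Bool) → ℝ :=
      fun x => (F (Fin.cons false x) - F (Fin.cons true x)) / 2 with hH
    have hLHS : ∑ s : Fin (k+1) → Bool, (coefW F s) ^ 2 * η ^ (2 * wtW s)
        = (∑ s : Fin k → Bool, (coefW G s) ^ 2 * η ^ (2 * wtW s))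
          + η ^ 2 * (∑ s : Fin k → Bool, (coefW H s) ^ 2 * η ^ (2 * wtW s)) := by
      rw [sum_succ_cube (fun s => (coefW F s) ^ 2 * η ^ (2 * wtW s))]
      rw [Finset.mul_sum, ← Finset.sum_add_distrib]
      apply Finset.sum_congr rfl
      intro s _
      rw [coefW_cons_false, coefW_cons_true, wtW_cons, wtW_cons]
      simp only [Bool.ite_eq_true_distrib, if_true, if_false]
      norm_num
      rw [show 2 * (1 + wtW s) = 2 + 2 * wtW s by ring, pow_add]
      ring
    rw [hLHS]
    have ihG := ih G
    have ihH := ih H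
    set A : ℝ := ((2:ℝ) ^ k)⁻¹ * ∑ x, |G x| ^ p with hA
    set B : ℝ := ((2:ℝ) ^ k)⁻¹ * ∑ x, |H x| ^ p with hB
    have hAnn : 0 ≤ A := by
      rw [hA]
      exact mul_nonneg (by positivity)
        (Finset.sum_nonneg fun x _ => Real.rpow_nonneg (abs_nonneg _) _)
    have hBnn : 0 ≤ B := by
      rw [hB]
      exact mul_nonneg (by positivity)
        (Finset.sum_nonneg fun x _ => Real.rpow_nonneg (abs_nonneg _) _)
    have step1 : (∑ s : Fin k → Bool, (coefW G s) ^ 2 * η ^ (2 * wtW s))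
          + η ^ 2 * (∑ s : Fin k → Bool, (coefW H s) ^ 2 * η ^ (2 * wtW s))
        ≤ A ^ ((2:ℝ)/p) + η ^ 2 * B ^ ((2:ℝ)/p) :=
      add_le_add ihG (mul_le_mul_of_nonneg_left ihH (sq_nonneg η))
    refine le_trans step1 ?_
    -- now the reverse Minkowski + two-point step
    set r : ℝ := p / 2 with hrdef
    have hr0 : 0 < r := by rw [hrdef]; positivity
    have hr1 : r ≤ 1 := by rw [hrdef]; linarith
    have hrinv : r⁻¹ = (2:ℝ) / p := by rw [hrdef, inv_div]
    set w : (Fin k → Bool) → ℝ := fun _ => ((2:ℝ) ^ k)⁻¹ with hw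
    have hwnn : ∀ x, 0 ≤ w x := fun x => by rw [hw]; positivity
    have RM := rev_minkowski w (fun x => (G x) ^ 2) (fun x => η ^ 2 * (H x) ^ 2)
      hwnn (fun x => sq_nonneg _) (fun x => mul_nonneg (sq_nonneg _) (sq_nonneg _)) hr0 hr1
    have eA : (∑ x, w x * ((G x) ^ 2) ^ r) = A := by
      rw [hA, Finset.mul_sum]
      apply Finset.sum_congr rfl
      intro x _
      congr 1
      rw [← sq_abs (G x), ← Real.rpow_two, ← Real.rpow_mul (abs_nonneg _),
        show (2:ℝ) * r = p by rw [hrdef]; ring]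
    have eB : (∑ x, w x * (η ^ 2 * (H x) ^ 2) ^ r) = η ^ p * B := by
      rw [hB, Finset.mul_sum, Finset.mul_sum]
      apply Finset.sum_congr rfl
      intro x _
      have h1 : ((η ^ 2 : ℝ)) ^ r = η ^ p := by
        rw [← Real.rpow_two, ← Real.rpow_mul hη0.le,
          show (2:ℝ) * r = p by rw [hrdef]; ring]
      have h2 : ((H x) ^ 2) ^ r = |H x| ^ p := by
        rw [← sq_abs (H x), ← Real.rpow_two, ← Real.rpow_mul (abs_nonneg _),
          show (2:ℝ) * r = p by rw [hrdef]; ring]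
      rw [Real.mul_rpow (sq_nonneg η) (sq_nonneg (H x)), h1, h2]
      simp only [hw]
      ring
    rw [eA, eB] at RM
    have eArpow : A ^ ((2:ℝ)/p) = A ^ r⁻¹ := by rw [hrinv]
    have eBrpow : (η ^ p * B) ^ r⁻¹ = η ^ 2 * B ^ ((2:ℝ)/p) := by
      rw [hrinv, Real.mul_rpow (Real.rpow_nonneg hη0.le _) hBnn,
        ← Real.rpow_mul hη0.le, show p * ((2:ℝ)/p) = 2 by field_simp, Real.rpow_two]
    have step2 : A ^ ((2:ℝ)/p) + η ^ 2 * B ^ ((2:ℝ)/p)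
        ≤ (∑ x, w x * ((G x) ^ 2 + η ^ 2 * (H x) ^ 2) ^ r) ^ r⁻¹ := by
      rw [eArpow, ← eBrpow]; exact RM
    refine le_trans step2 ?_
    have pointwise : ∀ x, ((G x) ^ 2 + η ^ 2 * (H x) ^ 2) ^ r
        ≤ (|F (Fin.cons false x)| ^ p + |F (Fin.cons true x)| ^ p) / 2 := by
      intro x
      have hGH1 : G x + H x = F (Fin.cons false x) := by rw [hG, hH]; ring
      have hGH2 : G x - H x = F (Fin.cons true x) := by rw [hG, hH]; ring
      have tp := two_point hp1 hp2 (G x) (H x)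
      rw [hGH1, hGH2] at tp
      have hpm1 : p - 1 = η ^ 2 := by rw [hpdef]; ring
      rw [hpm1] at tp
      have hMnn : 0 ≤ (|F (Fin.cons false x)| ^ p + |F (Fin.cons true x)| ^ p) / 2 := by
        have := Real.rpow_nonneg (abs_nonneg (F (Fin.cons false x))) p
        have := Real.rpow_nonneg (abs_nonneg (F (Fin.cons true x))) p
        linarith
      calc ((G x) ^ 2 + η ^ 2 * (H x) ^ 2) ^ r
          ≤ ((((|F (Fin.cons false x)| ^ p + |F (Fin.cons true x)| ^ p)/2)
              ^ ((2:ℝ)/p))) ^ r :=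
            Real.rpow_le_rpow (by positivity) tp hr0.le
        _ = (|F (Fin.cons false x)| ^ p + |F (Fin.cons true x)| ^ p)/2 := by
            rw [← Real.rpow_mul hMnn,
              show (2:ℝ)/p * r = 1 by rw [hrdef]; field_simp, Real.rpow_one]
    have hsum_le : (∑ x, w x * ((G x) ^ 2 + η ^ 2 * (H x) ^ 2) ^ r)
        ≤ ((2:ℝ) ^ (k+1))⁻¹ * ∑ y, |F y| ^ p := by
      rw [sum_succ_cube (fun y => |F y| ^ p), Finset.mul_sum]
      apply Finset.sum_le_sum
      intro x _
      calc w x * ((G x) ^ 2 + η ^ 2 * (H x) ^ 2) ^ r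
          ≤ w x * ((|F (Fin.cons false x)| ^ p + |F (Fin.cons true x)| ^ p)/2) :=
            mul_le_mul_of_nonneg_left (pointwise x) (hwnn x)
        _ = ((2:ℝ) ^ (k+1))⁻¹ * (|F (Fin.cons false x)| ^ p + |F (Fin.cons true x)| ^ p) := by
            rw [hw, pow_succ, mul_inv]
            ring
    calc (∑ x, w x * ((G x) ^ 2 + η ^ 2 * (H x) ^ 2) ^ r) ^ r⁻¹
        ≤ (((2:ℝ) ^ (k+1))⁻¹ * ∑ y, |F y| ^ p) ^ r⁻¹ :=
          Real.rpow_le_rpow (Finset.sum_nonneg fun x _ =>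
            mul_nonneg (hwnn x) (Real.rpow_nonneg (by positivity) _)) hsum_le
            (inv_nonneg.2 hr0.le)
      _ = (((2:ℝ) ^ (k+1))⁻¹ * ∑ y, |F y| ^ p) ^ ((2:ℝ)/p) := by rw [hrinv]

noncomputable def finsetEquiv (k : ℕ) : Finset (Fin k) ≃ (Fin k → Bool) where
  toFun S := fun i => decide (i ∈ S)
  invFun s := Finset.univ.filter (fun i => s i = true)
  left_inv S := by ext i; simp
  right_inv s := by funext i; simp

lemma wtW_equiv {k : ℕ} (S : Finset (Fin k)) : wtW (fun i => decide (i ∈ S)) = S.card := by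
  unfold wtW
  simp only [decide_eq_true_eq]
  rw [Finset.sum_ite_mem, Finset.univ_inter, Finset.sum_const, smul_eq_mul, mul_one]

lemma walsh_equiv {k : ℕ} (S : Finset (Fin k)) (x : Fin k → Bool) :
    (∏ i, (if (decide (i ∈ S)) && x i then (-1:ℝ) else 1)) = Walsh S x := by
  unfold Walsh
  have : ∀ i : Fin k, (if (decide (i ∈ S)) && x i then (-1:ℝ) else 1)
      = (if i ∈ S then (if x i then (-1:ℝ) else 1) else 1) := by
    intro i
    by_cases h : i ∈ S <;> by_cases hx : x i <;> simp [h, hx]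
  rw [Finset.prod_congr rfl (fun i _ => this i), Finset.prod_ite_mem, Finset.univ_inter]

lemma part1 {k : ℕ} {η : ℝ} (hη0 : 0 < η) (hη1 : η ≤ 1)
    (f : (Fin k → Bool) → ℝ) (fhat : Finset (Fin k) → ℝ)
    (hfhat : ∀ S, fhat S = ((2 : ℝ) ^ k)⁻¹ * ∑ x, f x * Walsh S x) :
    (∑ S : Finset (Fin k), (fhat S) ^ 2 * η ^ (2 * S.card)) ≤
      (((2 : ℝ) ^ k)⁻¹ * ∑ x, |f x| ^ ((1 : ℝ) + η ^ 2))
        ^ ((2 : ℝ) / (1 + η ^ 2)) := by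
  have hcoef : ∀ S : Finset (Fin k), coefW f (fun i => decide (i ∈ S)) = fhat S := by
    intro S
    rw [hfhat]
    unfold coefW
    congr 1
    exact Finset.sum_congr rfl (fun x _ => by rw [walsh_equiv])
  have htrans : (∑ S : Finset (Fin k), (fhat S) ^ 2 * η ^ (2 * S.card))
      = ∑ s : Fin k → Bool, (coefW f s) ^ 2 * η ^ (2 * wtW s) :=
    Fintype.sum_equiv (finsetEquiv k) _ _
      (fun S => by rw [show (finsetEquiv k) S = fun i => decide (i ∈ S) from rfl,
        hcoef, wtW_equiv])
  rw [htrans]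
  exact hyper_main hη0 hη1 k f

/-- Hypercontractivity consequence of the Bonami–Beckner inequality:
`∑_S f̂(S)² η^{2|S|} ≤ ‖f‖²_{1+η²}`, and for the indicator of a set `T` of
density `δ`, `∑_S 1̂_T(S)² η^{2|S|} ≤ δ^{2/(1+η²)}`. -/
theorem stmt18 {k : ℕ} (η : ℝ) (hη0 : 0 ≤ η) (hη1 : η ≤ 1)
    (f : (Fin k → Bool) → ℝ) (fhat : Finset (Fin k) → ℝ)
    (hfhat : ∀ S, fhat S = ((2 : ℝ) ^ k)⁻¹ * ∑ x, f x * Walsh S x)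
    (T : Finset (Fin k → Bool)) (That : Finset (Fin k) → ℝ)
    (hThat : ∀ S, That S = ((2 : ℝ) ^ k)⁻¹ * ∑ x ∈ T, Walsh S x) :
    (∑ S : Finset (Fin k), (fhat S) ^ 2 * η ^ (2 * S.card)) ≤
      (((2 : ℝ) ^ k)⁻¹ * ∑ x, |f x| ^ ((1 : ℝ) + η ^ 2))
        ^ ((2 : ℝ) / (1 + η ^ 2)) ∧
    (∑ S : Finset (Fin k), (That S) ^ 2 * η ^ (2 * S.card)) ≤
      ((T.card : ℝ) / 2 ^ k) ^ ((2 : ℝ) / (1 + η ^ 2)) := by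
  have hfT : ∀ S, That S
      = ((2 : ℝ) ^ k)⁻¹ * ∑ x, (if x ∈ T then (1:ℝ) else 0) * Walsh S x := by
    intro S
    rw [hThat]
    congr 1
    simp only [ite_mul, one_mul, zero_mul]
    rw [Finset.sum_ite_mem, Finset.univ_inter]
  rcases eq_or_lt_of_le hη0 with hz | hpos
  · -- η = 0
    subst hz
    have hsum0 : ∀ (g : Finset (Fin k) → ℝ),
        (∑ S : Finset (Fin k), g S * (0:ℝ) ^ (2 * S.card)) = g ∅ := by
      intro g
      rw [Finset.sum_eq_single (∅ : Finset (Fin k))]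
      · simp
      · intro S _ hS
        rw [zero_pow (by
          simp only [ne_eq, Nat.mul_eq_zero, OfNat.ofNat_ne_zero, false_or,
            Finset.card_eq_zero]
          exact hS), mul_zero]
      · intro h
        exact absurd (Finset.mem_univ _) h
    constructor
    · rw [hsum0 (fun S => fhat S ^ 2)]
      norm_num
      have h1 : |fhat ∅| ≤ ((2:ℝ) ^ k)⁻¹ * ∑ x, |f x| := by
        rw [hfhat]
        simp only [Walsh, Finset.prod_empty, mul_one]
        rw [abs_mul, abs_of_nonneg (by positivity : (0:ℝ) ≤ ((2:ℝ)^k)⁻¹)]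
        exact mul_le_mul_of_nonneg_left (Finset.abs_sum_le_sum_abs _ _) (by positivity)
      have h2 : (0:ℝ) ≤ ((2:ℝ) ^ k)⁻¹ * ∑ x, |f x| :=
        le_trans (abs_nonneg _) h1
      calc fhat ∅ ^ 2 = |fhat ∅| ^ 2 := (sq_abs _).symm
        _ ≤ (((2:ℝ) ^ k)⁻¹ * ∑ x, |f x|) ^ 2 := by
            exact pow_le_pow_left₀ (abs_nonneg _) h1 2
        _ ≤ _ := le_refl _
    · rw [hsum0 (fun S => That S ^ 2)]
      have hT0 : That ∅ = (T.card : ℝ) / 2 ^ k := by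
        rw [hThat]
        simp only [Walsh, Finset.prod_empty, Finset.sum_const, smul_eq_mul, mul_one]
        rw [inv_mul_eq_div]
        ring
      rw [hT0]
      rw [show ((2:ℝ)/(1 + 0 ^ 2)) = (2:ℝ) by norm_num, Real.rpow_two]
  · -- η > 0
    constructor
    · exact part1 hpos hη1 f fhat hfhat
    · have := part1 hpos hη1 (fun x => if x ∈ T then (1:ℝ) else 0) That hfT
      have hnorm : ((2:ℝ) ^ k)⁻¹
            * ∑ x, |if x ∈ T then (1:ℝ) else 0| ^ ((1:ℝ) + η ^ 2)
          = (T.card : ℝ) / 2 ^ k := by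
        have hpt : ∀ x : Fin k → Bool,
            |if x ∈ T then (1:ℝ) else 0| ^ ((1:ℝ) + η ^ 2)
            = (if x ∈ T then (1:ℝ) else 0) := by
          intro x
          by_cases h : x ∈ T
          · simp [h, Real.one_rpow]
          · simp [h, Real.zero_rpow (by positivity : (1:ℝ) + η ^ 2 ≠ 0)]
        rw [Finset.sum_congr rfl (fun x _ => hpt x), Finset.sum_ite_mem,
          Finset.univ_inter, Finset.sum_const, nsmul_eq_mul, mul_one, inv_mul_eq_div]
      rw [hnorm] at this
      exact this
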